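/- Let n ≥ 1 and let L : ℝⁿ → ℝ be three times continuously differentiable. Fix w ∈ ℝⁿ with (∂L/∂wᵢ)(w) · |wᵢ| = 0 for every i, and define the symmetric matrix H̃ by H̃ᵢⱼ = (∂²L/∂wᵢ∂wⱼ)(w) · |wᵢ| · |wⱼ|. Let p ∈ [1, ∞] and suppose H̃ is negative definite, i.e., γᵀ H̃ γ < 0 for every γ ≠ 0. Then there exist constants C > 0 and ρ₀ > 0 such that for all ρ ∈ (0, ρ₀), 0 ≤ sup { L(w + γ ⊙ |w|) − L(w) : ‖γ‖_p ≤ ρ } ≤ C ρ³. -/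

import Mathlib

open scoped ENNReal NNReal

open Metric

/-- Quantitative second-order Taylor upper bound for a `C³` function. -/
lemma taylor2_aux {E : Type*} [NormedAddCommGroup E] [NormedSpace ℝ E]
    (f : E → ℝ) (hf : ContDiff ℝ 3 f) (w : E) {ε : ℝ} (hε : 0 < ε) :
    ∃ δ > (0:ℝ), ∀ v : E, ‖v‖ ≤ δ →
      |f (w + v) - f w - fderiv ℝ f w v
        - (1/2) * (fderiv ℝ (fderiv ℝ f) w v) v| ≤ ε * ‖v‖^2 := by
  set f' := fderiv ℝ f with hf'def
  have hdf : Differentiable ℝ f := hf.differentiable (by norm_num)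
  have hf'c : ContDiff ℝ 2 f' := hf.fderiv_right (m := 2) (by norm_num)
  have hdf' : Differentiable ℝ f' := hf'c.differentiable (by norm_num)
  set H := fderiv ℝ f' w with hHdef
  have hsymm : ∀ u v : E, H u v = H v u := fun u v =>
    second_derivative_symmetric (fun y => (hdf y).hasFDerivAt) (hdf' w).hasFDerivAt u v
  have hflip : ∀ u : E, H.flip u = H u := by
    intro u; ext t; simp [ContinuousLinearMap.flip_apply, hsymm t u]
  have hcont : Continuous (fderiv ℝ f') :=
    (hf'c.fderiv_right (m := 1) (by norm_num)).continuous
  obtain ⟨δ, hδ, hball⟩ := (Metric.continuousAt_iff (f := fderiv ℝ f') (a := w)).1 hcont.continuousAt ε hε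
  refine ⟨δ/2, by positivity, ?_⟩
  intro v hv
  -- first-order Taylor bound for f' on the closed ball of radius δ/2
  have hA : ∀ y ∈ closedBall w (δ/2), ‖f' y - f' w - H (y - w)‖ ≤ ε * ‖y - w‖ := by
    intro y hy
    refine Convex.norm_image_sub_le_of_norm_hasFDerivWithin_le'
      (f' := fun z => fderiv ℝ f' z) (φ := H)
      (fun z _ => (hdf' z).hasFDerivAt.hasFDerivWithinAt)
      (fun z hz => ?_) (convex_closedBall w (δ/2))
      (mem_closedBall_self (by positivity)) hy
    have hzw : dist z w < δ := lt_of_le_of_lt (mem_closedBall.1 hz) (by linarith)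
    have := hball hzw
    replace this : ‖fderiv ℝ f' z - fderiv ℝ f' w‖ < ε := lt_of_eq_of_lt (dist_eq_norm (fderiv ℝ f' z) (fderiv ℝ f' w)).symm this
    exact this.le
  -- derivative of the quadratic remainder function
  have hsub : ∀ y : E, HasFDerivAt (fun z : E => z - w) (ContinuousLinearMap.id ℝ E) y :=
    fun y => (hasFDerivAt_id y).sub_const w
  have hq : ∀ y : E, HasFDerivAt (fun z => (H (z - w)) (z - w))
      ((H (y - w)).comp (ContinuousLinearMap.id ℝ E) + H.flip (y - w)) y := by
    intro y
    have hc : HasFDerivAt (fun z : E => H (z - w)) H y := by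
      have h : HasFDerivAt (fun z : E => H (z - w)) (H.comp (ContinuousLinearMap.id ℝ E)) y :=
        H.hasFDerivAt.comp y (hsub y)
      rwa [ContinuousLinearMap.comp_id] at h
    exact hc.clm_apply (hsub y)
  set g : E → ℝ := fun y => f y - f' w (y - w) - (1/2) * (H (y - w)) (y - w) with hgdef
  have hg' : ∀ y : E, HasFDerivAt g (f' y - f' w - H (y - w)) y := by
    intro y
    have h1 : HasFDerivAt f (f' y) y := (hdf y).hasFDerivAt
    have h2 : HasFDerivAt (fun z : E => f' w (z - w)) (f' w) y := by
      have h : HasFDerivAt (fun z : E => f' w (z - w)) ((f' w).comp (ContinuousLinearMap.id ℝ E)) y :=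
        (f' w).hasFDerivAt.comp y (hsub y)
      rwa [ContinuousLinearMap.comp_id] at h
    have h3 := (hq y).const_mul (1/2 : ℝ)
    have h4 := (h1.sub h2).sub h3
    refine h4.congr_fderiv ?_
    ext t
    simp only [ContinuousLinearMap.coe_sub', Pi.sub_apply, ContinuousLinearMap.smul_apply,
      ContinuousLinearMap.add_apply, ContinuousLinearMap.coe_comp', Function.comp_apply,
      ContinuousLinearMap.coe_id', id_eq, ContinuousLinearMap.flip_apply, smul_eq_mul]
    rw [hsymm t (y - w)]
    ring
  -- mean value on the ball of radius ‖v‖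
  have hsub2 : closedBall w ‖v‖ ⊆ closedBall w (δ/2) := closedBall_subset_closedBall hv
  have hB := Convex.norm_image_sub_le_of_norm_hasFDerivWithin_le'
    (f := g) (f' := fun y => f' y - f' w - H (y - w)) (φ := (0 : E →L[ℝ] ℝ))
    (C := ε * ‖v‖) (x := w) (y := w + v)
    (fun y _ => (hg' y).hasFDerivWithinAt)
    (fun y hy => by
      rw [sub_zero]
      refine (hA y (hsub2 hy)).trans ?_
      have : ‖y - w‖ ≤ ‖v‖ := by simpa [dist_eq_norm] using mem_closedBall.1 hy
      nlinarith [norm_nonneg (y - w)])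
    (convex_closedBall w ‖v‖)
    (mem_closedBall_self (norm_nonneg v))
    (by simp [mem_closedBall, dist_eq_norm])
  have hgw : g w = f w := by simp [hgdef]
  have hgwv : g (w + v) = f (w + v) - f' w v - (1/2) * (H v) v := by
    simp only [hgdef, add_sub_cancel_left]
  rw [hgwv, hgw] at hB
  simp only [ContinuousLinearMap.zero_apply, sub_zero] at hB
  have : ‖w + v - w‖ = ‖v‖ := by simp
  rw [this] at hB
  calc |f (w + v) - f w - f' w v - (1/2) * (H v) v|
      = ‖f (w + v) - f' w v - (1/2) * (H v) v - f w‖ := by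
        rw [Real.norm_eq_abs]; ring_nf
    _ ≤ ε * ‖v‖ * ‖v‖ := hB
    _ = ε * ‖v‖^2 := by ring

set_option maxHeartbeats 1000000 in
/-- If the rescaled gradient vanishes and `H̃ = ∇²L(w) ⊙ |w||w|ᵀ` is negative definite, the
worst-case elementwise adaptive sharpness is `O(ρ³)` (and nonnegative) for small `ρ`. -/
theorem worst_case_adaptive_sharpness_negative_definite
    (n : ℕ) (hn : 1 ≤ n) (L : (Fin n → ℝ) → ℝ) (hL : ContDiff ℝ 3 L)
    (w : Fin n → ℝ)
    (hcrit : ∀ i, fderiv ℝ L w (Pi.single i 1) * |w i| = 0)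
    (p : ℝ≥0∞) [Fact (1 ≤ p)]
    (hnegdef : ∀ γ : Fin n → ℝ, γ ≠ 0 →
      ∑ i, ∑ j, γ i *
        (fderiv ℝ (fun x => fderiv ℝ L x (Pi.single j 1)) w (Pi.single i 1)
          * (|w i| * |w j|)) * γ j < 0) :
    ∃ C > (0 : ℝ), ∃ ρ₀ > (0 : ℝ), ∀ ρ : ℝ, 0 < ρ → ρ < ρ₀ →
      0 ≤ sSup {s : ℝ | ∃ γ : Fin n → ℝ,
          ‖(WithLp.equiv p (Fin n → ℝ)).symm γ‖ ≤ ρ ∧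
          s = L (w + fun i => γ i * |w i|) - L w} ∧
      sSup {s : ℝ | ∃ γ : Fin n → ℝ,
          ‖(WithLp.equiv p (Fin n → ℝ)).symm γ‖ ≤ ρ ∧
          s = L (w + fun i => γ i * |w i|) - L w} ≤ C * ρ ^ 3 := by
  have i0 : Fin n := ⟨0, hn⟩
  haveI : Nontrivial (Fin n → ℝ) :=
    ⟨0, Pi.single i0 1, by
      intro h; have := congrFun h i0; simp at this⟩
  have hdL : Differentiable ℝ L := hL.differentiable (by norm_num)
  have hdL' : Differentiable ℝ (fderiv ℝ L) :=
    (hL.fderiv_right (m := 2) (by norm_num)).differentiable (by norm_num)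
  set H := fderiv ℝ (fderiv ℝ L) w with hHdef
  have hsymmH : ∀ a b : Fin n → ℝ, H a b = H b a := fun a b =>
    second_derivative_symmetric (fun y => (hdL y).hasFDerivAt) (hdL' w).hasFDerivAt a b
  -- identification of the second derivative entries
  have hentry : ∀ i j : Fin n,
      fderiv ℝ (fun x => fderiv ℝ L x (Pi.single j 1)) w (Pi.single i 1)
        = H (Pi.single i 1) (Pi.single j 1) := by
    intro i j
    have h := fderiv_clm_apply (c := fderiv ℝ L) (u := fun _ => (Pi.single j 1 : Fin n → ℝ))
      (hdL' w) (differentiableAt_const _)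
    rw [h]
    simp [ContinuousLinearMap.flip_apply, hHdef]
  -- the quadratic form
  set Q : (Fin n → ℝ) → ℝ := fun γ =>
    ∑ i, ∑ j, γ i * (H (Pi.single i 1) (Pi.single j 1) * (|w i| * |w j|)) * γ j with hQdef
  have hQneg : ∀ γ : Fin n → ℝ, γ ≠ 0 → Q γ < 0 := by
    intro γ hγ
    have := hnegdef γ hγ
    simpa only [hentry] using this
  have hQcont : Continuous Q := by
    refine continuous_finset_sum _ fun i _ => continuous_finset_sum _ fun j _ => ?_
    exact ((continuous_apply i).mul continuous_const).mul (continuous_apply j)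
  have hQhom : ∀ (c : ℝ) (γ : Fin n → ℝ), Q (c • γ) = c^2 * Q γ := by
    intro c γ
    simp only [hQdef, Pi.smul_apply, smul_eq_mul, Finset.mul_sum]
    exact Finset.sum_congr rfl fun i _ => Finset.sum_congr rfl fun j _ => by ring
  -- negative-definiteness gives a uniform gap on the sphere
  obtain ⟨u, huS, hmax⟩ := (isCompact_sphere (0 : Fin n → ℝ) 1).exists_isMaxOn
    (NormedSpace.sphere_nonempty.2 zero_le_one) hQcont.continuousOn
  have hu1 : ‖u‖ = 1 := by simpa using huS
  have hune : u ≠ 0 := by intro h; rw [h] at hu1; simp at hu1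
  set lam : ℝ := -Q u with hlamdef
  have hlam : 0 < lam := by
    have := hQneg u hune; simp only [hlamdef]; linarith
  have hQle : ∀ γ : Fin n → ℝ, Q γ ≤ -lam * ‖γ‖^2 := by
    intro γ
    rcases eq_or_ne γ 0 with h | h
    · simp [h, hQdef]
    · have hγn : 0 < ‖γ‖ := norm_pos_iff.2 h
      have hmem : ‖γ‖⁻¹ • γ ∈ sphere (0 : Fin n → ℝ) 1 := by
        simp [norm_smul, abs_of_pos (inv_pos.2 hγn), inv_mul_cancel₀ hγn.ne']
      have h1 := hmax hmem
      have h2 : Q (‖γ‖⁻¹ • γ) ≤ -lam := by simpa [hlamdef] using h1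
      have h3 : Q (‖γ‖⁻¹ • γ) = (‖γ‖⁻¹)^2 * Q γ := hQhom _ _
      have h4 : (‖γ‖⁻¹)^2 * Q γ ≤ -lam := h3 ▸ h2
      have hone : ‖γ‖^2 * (‖γ‖⁻¹)^2 = 1 := by
        field_simp
      calc Q γ = ‖γ‖^2 * ((‖γ‖⁻¹)^2 * Q γ) := by rw [← mul_assoc, hone, one_mul]
        _ ≤ ‖γ‖^2 * (-lam) := mul_le_mul_of_nonneg_left h4 (sq_nonneg _)
        _ = -lam * ‖γ‖^2 := by ring
  -- w is nonzero
  have hwne : w ≠ 0 := by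
    intro h
    have h1 := hQneg (Pi.single i0 1) (by
      intro hc; have := congrFun hc i0; simp at this)
    rw [hQdef] at h1
    simp [h] at h1
  have hM : 0 < ‖w‖ := norm_pos_iff.2 hwne
  set M := ‖w‖ with hMdef
  -- norm comparison constant for the p-norm
  set K : ℝ := ‖((PiLp.continuousLinearEquiv p ℝ (fun _ : Fin n => ℝ)) :
      PiLp p (fun _ : Fin n => ℝ) →L[ℝ] (Fin n → ℝ))‖ + 1 with hKdef
  have hK0 : 0 < K := by positivity
  have hK : ∀ γ : Fin n → ℝ, ‖γ‖ ≤ K * ‖(WithLp.equiv p (Fin n → ℝ)).symm γ‖ := by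
    intro γ
    have h := ((PiLp.continuousLinearEquiv p ℝ (fun _ : Fin n => ℝ)).toContinuousLinearMap).le_opNorm
      ((WithLp.equiv p (Fin n → ℝ)).symm γ)
    have he : ((PiLp.continuousLinearEquiv p ℝ (fun _ : Fin n => ℝ)).toContinuousLinearMap)
        ((WithLp.equiv p (Fin n → ℝ)).symm γ) = γ := by
      rfl
    rw [he] at h
    have hnn : (0:ℝ) ≤ ‖(WithLp.equiv p (Fin n → ℝ)).symm γ‖ := norm_nonneg _
    nlinarith
  -- Taylor bound with ε = lam / (2 * (M^2 + 1))
  have hε : 0 < lam / (2 * (M^2 + 1)) := by positivity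
  obtain ⟨δ, hδ, htaylor⟩ := taylor2_aux L hL w hε
  set ε := lam / (2 * (M^2 + 1)) with hεdef
  have hεM : ε * M^2 ≤ lam / 2 := by
    rw [hεdef, div_mul_eq_mul_div, div_le_div_iff₀ (by positivity) (by norm_num)]
    nlinarith
  refine ⟨1, one_pos, δ / (M * K + 1), by positivity, ?_⟩
  intro ρ hρ hρ₀
  -- the key estimate: every element of the set is ≤ 0
  have hbound : ∀ s ∈ {s : ℝ | ∃ γ : Fin n → ℝ,
      ‖(WithLp.equiv p (Fin n → ℝ)).symm γ‖ ≤ ρ ∧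
      s = L (w + fun i => γ i * |w i|) - L w}, s ≤ 0 := by
    rintro s ⟨γ, hγρ, rfl⟩
    set v : Fin n → ℝ := fun i => γ i * |w i| with hvdef
    have hγn : ‖γ‖ ≤ K * ρ := by
      refine (hK γ).trans ?_
      exact mul_le_mul_of_nonneg_left hγρ hK0.le
    have hvM : ‖v‖ ≤ M * ‖γ‖ := by
      rw [pi_norm_le_iff_of_nonneg (by positivity)]
      intro i
      have h1 : |γ i| ≤ ‖γ‖ := by
        simpa [Real.norm_eq_abs] using norm_le_pi_norm γ i
      have h2 : |w i| ≤ M := by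
        simpa [Real.norm_eq_abs, hMdef] using norm_le_pi_norm w i
      have : ‖v i‖ = |γ i| * |w i| := by
        simp [hvdef, abs_mul, abs_abs, Real.norm_eq_abs]
      rw [this]
      calc |γ i| * |w i| ≤ ‖γ‖ * M :=
            mul_le_mul h1 h2 (abs_nonneg _) (norm_nonneg _)
        _ = M * ‖γ‖ := mul_comm _ _
    have hvδ : ‖v‖ ≤ δ := by
      have h1 : ‖v‖ ≤ M * (K * ρ) :=
        hvM.trans (mul_le_mul_of_nonneg_left hγn hM.le)
      have h2 : M * (K * ρ) ≤ δ := by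
        have h3 : ρ ≤ δ / (M * K + 1) := hρ₀.le
        rw [le_div_iff₀ (by positivity)] at h3
        nlinarith [mul_pos hM hK0]
      linarith
    have hT := htaylor v hvδ
    -- the linear term vanishes
    have hvsum : v = ∑ i : Fin n, (γ i * |w i|) • (Pi.single i 1 : Fin n → ℝ) := by
      ext j
      rw [Finset.sum_apply]
      simp [Pi.single_apply, Finset.sum_ite_eq', hvdef]
    have hlin : fderiv ℝ L w v = 0 := by
      rw [hvsum, map_sum]
      refine Finset.sum_eq_zero fun i _ => ?_
      rw [map_smul, smul_eq_mul]
      have h := hcrit i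
      calc (γ i * |w i|) * fderiv ℝ L w (Pi.single i 1)
          = γ i * (fderiv ℝ L w (Pi.single i 1) * |w i|) := by ring
        _ = 0 := by rw [h, mul_zero]
    -- the quadratic term is Q γ
    have hquad : (fderiv ℝ (fderiv ℝ L) w v) v = Q γ := by
      rw [← hHdef, hvsum, hQdef]
      simp only [map_sum, ContinuousLinearMap.sum_apply, map_smul,
        ContinuousLinearMap.smul_apply, smul_eq_mul, Finset.mul_sum]
      refine Finset.sum_congr rfl fun i _ => ?_
      refine Finset.sum_congr rfl fun j _ => ?_
      rw [hsymmH (Pi.single j 1) (Pi.single i 1)]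
      ring
    rw [← hHdef] at hquad
    rw [hlin, sub_zero, hquad] at hT
    have habs := (abs_le.1 hT).2
    have hQγ : Q γ ≤ -lam * ‖γ‖^2 := hQle γ
    have hv2 : ‖v‖^2 ≤ M^2 * ‖γ‖^2 := by
      nlinarith [mul_self_le_mul_self (norm_nonneg v) hvM]
    have hεv : ε * ‖v‖^2 ≤ (lam/2) * ‖γ‖^2 := by
      calc ε * ‖v‖^2 ≤ ε * (M^2 * ‖γ‖^2) := mul_le_mul_of_nonneg_left hv2 hε.le
        _ = (ε * M^2) * ‖γ‖^2 := by ring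
        _ ≤ (lam/2) * ‖γ‖^2 := mul_le_mul_of_nonneg_right hεM (sq_nonneg _)
    clear_value v Q lam ε M K H
    linarith
  have hzero : (0:ℝ) ∈ {s : ℝ | ∃ γ : Fin n → ℝ,
      ‖(WithLp.equiv p (Fin n → ℝ)).symm γ‖ ≤ ρ ∧
      s = L (w + fun i => γ i * |w i|) - L w} := by
    refine ⟨0, ?_, ?_⟩
    · have : ((WithLp.equiv p (Fin n → ℝ)).symm (0 : Fin n → ℝ)) = 0 := rfl
      rw [this, norm_zero]
      exact hρ.le
    · have h1 : (w + fun i => (0 : Fin n → ℝ) i * |w i|) = w := by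
        funext i; simp
      rw [h1, sub_self]
  have hbdd : BddAbove {s : ℝ | ∃ γ : Fin n → ℝ,
      ‖(WithLp.equiv p (Fin n → ℝ)).symm γ‖ ≤ ρ ∧
      s = L (w + fun i => γ i * |w i|) - L w} := ⟨0, hbound⟩
  constructor
  · exact le_csSup hbdd hzero
  · refine (csSup_le ⟨0, hzero⟩ hbound).trans ?_
    positivity
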